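/- For every nonempty subset A ⊆ N one has v^A = Σ_{B : A ⊆ B ⊆ N} v_B. -/
import Mathlib

open Finset in
lemma aux_sum_neg_one {n : ℕ} (D : Finset (Fin n)) :
    ∑ B ∈ Finset.univ.powerset.filter (fun B => D ⊆ B), (-1:ℝ)^B.card
      = if D = Finset.univ then (-1:ℝ)^n else 0 := by
  have himg : Finset.univ.powerset.filter (fun B => D ⊆ B)
      = (Finset.univ \ D).powerset.image (· ∪ D) := by
    ext B
    simp only [mem_filter, mem_powerset, mem_image]
    constructor
    · rintro ⟨-, hDB⟩
      exact ⟨B \ D, sdiff_subset_sdiff (subset_univ _) le_rfl,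
        by rw [sdiff_union_self_eq_union, union_eq_left.2 hDB]⟩
    · rintro ⟨E, -, rfl⟩
      exact ⟨subset_univ _, subset_union_right⟩
  rw [himg, Finset.sum_image ?inj]
  case inj =>
    intro E₁ h₁ E₂ h₂ h
    have d₁ : Disjoint E₁ D := Finset.sdiff_disjoint.mono_left (mem_powerset.1 h₁)
    have d₂ : Disjoint E₂ D := Finset.sdiff_disjoint.mono_left (mem_powerset.1 h₂)
    have := congrArg (· \ D) h
    simpa [Finset.union_sdiff_right, sdiff_eq_self_of_disjoint d₁,
      sdiff_eq_self_of_disjoint d₂] using this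
  have hcard : ∀ E ∈ (Finset.univ \ D).powerset, (-1:ℝ)^(E ∪ D).card
      = (-1:ℝ)^D.card * (-1:ℝ)^E.card := by
    intro E hE
    have d : Disjoint E D := Finset.sdiff_disjoint.mono_left (mem_powerset.1 hE)
    rw [card_union_of_disjoint d, pow_add, mul_comm]
  rw [Finset.sum_congr rfl hcard, ← Finset.mul_sum]
  have key : ∑ E ∈ (Finset.univ \ D).powerset, (-1:ℝ)^E.card
      = if (Finset.univ \ D : Finset (Fin n)) = ∅ then 1 else 0 := by
    have h := @Finset.sum_powerset_neg_one_pow_card (Fin n) _ (Finset.univ \ D)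
    have h2 := congrArg (fun z : ℤ => (z : ℝ)) h
    push_cast at h2
    simpa [apply_ite (fun z : ℤ => (z : ℝ))] using h2
  rw [key]
  by_cases h : D = Finset.univ
  · subst h
    simp [Finset.card_univ]
  · have hne : (Finset.univ \ D : Finset (Fin n)) ≠ ∅ := by
      rw [Ne, sdiff_eq_empty_iff_subset]
      intro hsub
      exact h (subset_antisymm (subset_univ _) hsub)
    simp [h, hne]

/-- Remark 4.2: `v^A = Σ_{A ⊆ B ⊆ N} v_B` for every nonempty `A ⊆ N`. -/
theorem vUpper_eq_sum_vLower (n : ℕ) (hn : 1 ≤ n)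
    (u vLower vUpper : Finset (Fin n) → ℝ) (hu0 : u ∅ = 0)
    (hvLower : ∀ A : Finset (Fin n), A.Nonempty →
      vLower A = ∑ B ∈ Finset.univ.powerset.filter
          (fun B => Finset.univ \ A ⊆ B ∧ B ≠ ∅),
        (-1 : ℝ) ^ (A.card + B.card + n + 1) * u B)
    (hvUpper : ∀ A : Finset (Fin n), A.Nonempty →
      vUpper A = ∑ B ∈ A.powerset.filter (fun B => B ≠ ∅),
        (-1 : ℝ) ^ (B.card + 1) * u B)
    (A : Finset (Fin n)) (hA : A.Nonempty) :
    vUpper A = ∑ B ∈ Finset.univ.powerset.filter (fun B => A ⊆ B), vLower B := by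
  classical
  rw [hvUpper A hA]
  have step1 : ∀ B ∈ Finset.univ.powerset.filter (fun B => A ⊆ B),
      vLower B = ∑ C ∈ Finset.univ.powerset,
        if Finset.univ \ B ⊆ C ∧ C ≠ ∅ then (-1:ℝ)^(B.card + C.card + n + 1) * u C else 0 := by
    intro B hB
    have hAB : A ⊆ B := (Finset.mem_filter.1 hB).2
    rw [hvLower B (hA.mono hAB), Finset.sum_filter]
  rw [Finset.sum_congr rfl step1, Finset.sum_comm]
  have step2 : ∀ C ∈ Finset.univ.powerset,
      (∑ B ∈ Finset.univ.powerset.filter (fun B => A ⊆ B),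
        if Finset.univ \ B ⊆ C ∧ C ≠ ∅ then (-1:ℝ)^(B.card + C.card + n + 1) * u C else 0)
      = if C ⊆ A ∧ C ≠ ∅ then (-1:ℝ)^(C.card + 1) * u C else 0 := by
    intro C _
    by_cases hC : C = ∅
    · simp [hC]
    · have hcond : ∀ B : Finset (Fin n),
          (Finset.univ \ B ⊆ C ∧ C ≠ ∅) ↔ (Finset.univ \ C ⊆ B) := by
        intro B
        have hiff : Finset.univ \ B ⊆ C ↔ Finset.univ \ C ⊆ B := by
          constructor <;> intro h x hx <;>
          · have hx' := Finset.mem_sdiff.1 hx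
            by_contra hxB
            exact hx'.2 (h (Finset.mem_sdiff.2 ⟨Finset.mem_univ x, hxB⟩))
        rw [hiff]
        exact ⟨fun h => h.1, fun h => ⟨h, hC⟩⟩
      simp only [hcond]
      rw [← Finset.sum_filter, Finset.filter_filter]
      have hset : Finset.univ.powerset.filter (fun B => A ⊆ B ∧ Finset.univ \ C ⊆ B)
          = Finset.univ.powerset.filter (fun B => A ∪ (Finset.univ \ C) ⊆ B) := by
        ext B; simp [Finset.union_subset_iff]
      rw [hset]
      have hpull : ∀ B : Finset (Fin n),
          (-1:ℝ)^(B.card + C.card + n + 1) * u C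
            = (-1:ℝ)^B.card * ((-1:ℝ)^(C.card + n + 1) * u C) := by
        intro B
        rw [show B.card + C.card + n + 1 = B.card + (C.card + n + 1) by ring, pow_add, mul_assoc]
      simp only [hpull]
      rw [← Finset.sum_mul, aux_sum_neg_one]
      have hDuniv : (A ∪ (Finset.univ \ C) = Finset.univ) ↔ C ⊆ A := by
        constructor
        · intro h x hx
          have hx2 : x ∈ A ∪ (Finset.univ \ C) := by rw [h]; exact Finset.mem_univ x
          rcases Finset.mem_union.1 hx2 with h' | h'
          · exact h'
          · exact absurd hx (Finset.mem_sdiff.1 h').2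
        · intro h
          apply subset_antisymm (Finset.subset_univ _)
          intro x _
          by_cases hxC : x ∈ C
          · exact Finset.mem_union_left _ (h hxC)
          · exact Finset.mem_union_right _ (Finset.mem_sdiff.2 ⟨Finset.mem_univ x, hxC⟩)
      by_cases hCA : C ⊆ A
      · rw [if_pos (hDuniv.2 hCA), if_pos ⟨hCA, hC⟩]
        rw [show C.card + n + 1 = n + (C.card + 1) by ring, pow_add]
        rw [← mul_assoc, ← mul_assoc, ← pow_add, show n + n = 2 * n by ring, pow_mul]
        norm_num
      · rw [if_neg (fun h => hCA (hDuniv.1 h)), if_neg (fun h => hCA h.1), zero_mul]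
  rw [Finset.sum_congr rfl step2, ← Finset.sum_filter]
  apply Finset.sum_congr _ (fun _ _ => rfl)
  ext C
  simp [and_comm]
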